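/- With the definitions of R⁺, R⁻, g, ℓ_AP and ℓ̂_CoTAP below, one has ℓ̂_CoTAP ≤ (1/M) Σ_{i=1}^M γ̃_i · g( ψ_i · |{j : q̂_j < q̂_i and p̂_i ≤ p̂_j}| ), where ψ_i = 1/|{j : q̂_j ≥ q̂_i and p̂_i ≤ p̂_j}| and γ̃_i = Σ_{k : q̂_k ≤ q̂_i} γ(q̂_k)/r_k with r_k = |{j : q̂_j ≥ q̂_k}|. -/

import Mathlib

open Finset
open scoped BigOperators

/-- `R⁺(i, t)`: the number of indices `j` with `q̂ j ≥ t` and `p̂ i ≤ p̂ j`. -/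
noncomputable def Rpos {M : ℕ} (phat qhat : Fin M → ℝ) (i : Fin M) (t : ℝ) : ℕ :=
  (Finset.univ.filter (fun j => t ≤ qhat j ∧ phat i ≤ phat j)).card

/-- `R⁻(i, t)`: the number of indices `j` with `q̂ j < t` and `p̂ i ≤ p̂ j`. -/
noncomputable def Rneg {M : ℕ} (phat qhat : Fin M → ℝ) (i : Fin M) (t : ℝ) : ℕ :=
  (Finset.univ.filter (fun j => qhat j < t ∧ phat i ≤ phat j)).card

/-- `g x = x / (1 + x)`. -/
noncomputable def g (x : ℝ) : ℝ := x / (1 + x)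

/-- The AP loss at threshold `t`. -/
noncomputable def lAP {M : ℕ} (phat qhat : Fin M → ℝ) (t : ℝ) : ℝ :=
  (((Finset.univ.filter (fun i : Fin M => t ≤ qhat i)).card : ℝ))⁻¹ *
    ∑ i ∈ Finset.univ.filter (fun i : Fin M => t ≤ qhat i),
      g ((Rneg phat qhat i t : ℝ) / (Rpos phat qhat i t : ℝ))

/-- The continuous-target AP loss. -/
noncomputable def lCoTAP {M : ℕ} (phat qhat : Fin M → ℝ) (γ : ℝ → ℝ) : ℝ :=
  ((M : ℝ))⁻¹ * ∑ k, γ (qhat k) * lAP phat qhat (qhat k)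


lemma g_frac (a b : ℝ) (ha : 0 ≤ a) (hb : 0 < b) : g (a / b) = a / (b + a) := by
  unfold g
  have hba : 0 < b + a := by linarith
  field_simp

lemma sum_RposRneg {M : ℕ} (phat qhat : Fin M → ℝ) (i : Fin M) (t : ℝ) :
    Rpos phat qhat i t + Rneg phat qhat i t =
      (Finset.univ.filter (fun j => phat i ≤ phat j)).card := by
  classical
  unfold Rpos Rneg
  have h1 : Finset.univ.filter (fun j => t ≤ qhat j ∧ phat i ≤ phat j) =
      (Finset.univ.filter (fun j => phat i ≤ phat j)).filter (fun j => t ≤ qhat j) := by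
    rw [Finset.filter_filter]; simp [and_comm]
  have h2 : Finset.univ.filter (fun j => qhat j < t ∧ phat i ≤ phat j) =
      (Finset.univ.filter (fun j => phat i ≤ phat j)).filter (fun j => ¬ (t ≤ qhat j)) := by
    rw [Finset.filter_filter]; simp [and_comm, not_le]
  rw [h1, h2, Finset.card_filter_add_card_filter_not]

lemma Rpos_pos {M : ℕ} (phat qhat : Fin M → ℝ) (i : Fin M) (t : ℝ) (ht : t ≤ qhat i) :
    0 < Rpos phat qhat i t := by
  classical
  unfold Rpos
  rw [Finset.card_pos]
  exact ⟨i, by simp [ht]⟩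

theorem stmt_12

    (M : ℕ) (hM : 1 ≤ M) (phat qhat : Fin M → ℝ)
    (γ : ℝ → ℝ) (hγ : ∀ t, 0 ≤ γ t) :
    lCoTAP phat qhat γ ≤
      ((M : ℝ))⁻¹ * ∑ i,
        (∑ k ∈ Finset.univ.filter (fun k : Fin M => qhat k ≤ qhat i),
            γ (qhat k) / ((Finset.univ.filter (fun j : Fin M => qhat k ≤ qhat j)).card : ℝ)) *
          g (((Rpos phat qhat i (qhat i) : ℝ))⁻¹ * (Rneg phat qhat i (qhat i) : ℝ)) := by
  classical
  have hstep1 : lCoTAP phat qhat γ =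
      ((M : ℝ))⁻¹ * ∑ k, ∑ i ∈ Finset.univ.filter (fun i : Fin M => qhat k ≤ qhat i),
        γ (qhat k) / ((Finset.univ.filter (fun j : Fin M => qhat k ≤ qhat j)).card : ℝ) *
          g ((Rneg phat qhat i (qhat k) : ℝ) / (Rpos phat qhat i (qhat k) : ℝ)) := by
    unfold lCoTAP lAP
    congr 1
    refine Finset.sum_congr rfl fun k _ => ?_
    rw [← Finset.mul_sum, div_eq_mul_inv]
    ring
  rw [hstep1]
  have hswap : (∑ k, ∑ i ∈ Finset.univ.filter (fun i : Fin M => qhat k ≤ qhat i),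
        γ (qhat k) / ((Finset.univ.filter (fun j : Fin M => qhat k ≤ qhat j)).card : ℝ) *
          g ((Rneg phat qhat i (qhat k) : ℝ) / (Rpos phat qhat i (qhat k) : ℝ)))
      = ∑ i, ∑ k ∈ Finset.univ.filter (fun k : Fin M => qhat k ≤ qhat i),
        γ (qhat k) / ((Finset.univ.filter (fun j : Fin M => qhat k ≤ qhat j)).card : ℝ) *
          g ((Rneg phat qhat i (qhat k) : ℝ) / (Rpos phat qhat i (qhat k) : ℝ)) := by
    refine Finset.sum_comm' ?_
    intro k i
    simp
  rw [hswap]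
  have hMpos : (0:ℝ) < M := by exact_mod_cast hM
  apply mul_le_mul_of_nonneg_left _ (by positivity)
  apply Finset.sum_le_sum
  intro i _
  rw [Finset.sum_mul]
  apply Finset.sum_le_sum
  intro k hk
  have hk' : qhat k ≤ qhat i := by simpa using hk
  have hnn : 0 ≤ γ (qhat k) / ((Finset.univ.filter (fun j : Fin M => qhat k ≤ qhat j)).card : ℝ) := by
    apply div_nonneg (hγ _); positivity
  refine mul_le_mul_of_nonneg_left ?_ hnn
  -- core inequality on g
  have hpk : 0 < Rpos phat qhat i (qhat k) := Rpos_pos phat qhat i (qhat k) hk'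
  have hpi : 0 < Rpos phat qhat i (qhat i) := Rpos_pos phat qhat i (qhat i) le_rfl
  have hpk' : (0:ℝ) < (Rpos phat qhat i (qhat k) : ℝ) := by exact_mod_cast hpk
  have hpi' : (0:ℝ) < (Rpos phat qhat i (qhat i) : ℝ) := by exact_mod_cast hpi
  rw [inv_mul_eq_div]
  rw [g_frac _ _ (by positivity) hpk', g_frac _ _ (by positivity) hpi']
  have hsk := sum_RposRneg phat qhat i (qhat k)
  have hsi := sum_RposRneg phat qhat i (qhat i)
  have hsum : (Rpos phat qhat i (qhat k) : ℝ) + (Rneg phat qhat i (qhat k) : ℝ)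
      = (Rpos phat qhat i (qhat i) : ℝ) + (Rneg phat qhat i (qhat i) : ℝ) := by
    have := hsk.trans hsi.symm
    exact_mod_cast this
  rw [hsum]
  have hmono : Rneg phat qhat i (qhat k) ≤ Rneg phat qhat i (qhat i) := by
    apply Finset.card_le_card
    intro j hj
    simp only [Finset.mem_filter, Finset.mem_univ, true_and] at hj ⊢
    exact ⟨lt_of_lt_of_le hj.1 hk', hj.2⟩
  have hden : (0:ℝ) < (Rpos phat qhat i (qhat i) : ℝ) + (Rneg phat qhat i (qhat i) : ℝ) := by
    positivity
  apply div_le_div_of_nonneg_right ?_ hden.le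
  exact_mod_cast hmono
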